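/- For every infinite cardinal κ, every cardinal λ ≥ κ, and every ordinal α ≤ κ⁺: Pr⁰_α(λ; <κ⁺, κ) holds if and only if Pr¹_α(λ; <κ⁺, κ) holds. Consequently, for every α ≤ κ⁺, λ⁰_α(κ) = λ¹_α(κ), where λ^l_α(κ) = min{λ : Pr^l_α(λ; <κ⁺, κ)}. -/

import Mathlib

open FirstOrder Cardinal

universe u

namespace Sh522

/-- `a ∈ clLt L M κ B` iff `a` is in the `<κ`-closure of `B` in `M`:
for some quantifier-free formula `φ(y, x₁, …, xₙ)` and parameters `b` from `B`,
`M ⊨ φ[a, b]` and the set of solutions of `φ(−, b)` has cardinality `< κ`. -/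
def clLt (L : FirstOrder.Language.{u, u}) (M : Type u) [L.Structure M]
    (κ : Cardinal.{u}) (B : Set M) : Set M :=
  {a | ∃ (n : ℕ) (φ : L.Formula (Fin (n + 1))),
      FirstOrder.Language.BoundedFormula.IsQF φ ∧
      ∃ b : Fin n → M, (∀ i, b i ∈ B) ∧
        φ.Realize (Fin.cons a b) ∧
        Cardinal.mk {x : M // φ.Realize (Fin.cons x b)} < κ}

/-- `rk^l(w, M; <κ) ≥ 0`. -/
def rkBase (L : FirstOrder.Language.{u, u}) (M : Type u) [L.Structure M]
    (κ : Cardinal.{u}) (w : Set M) : Prop :=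
  w.Finite ∧ w.Nonempty ∧ ∀ a ∈ w, a ∉ clLt L M κ (w \ {a})

/-- The successor step of the rank: `rk^l(w, M; <κ) ≥ β + 1` where `P` is
`rk^l(−, M; <κ) ≥ β`. -/
def rkStep (L : FirstOrder.Language.{u, u}) (M : Type u) [L.Structure M]
    (l : ℕ) (κ : Cardinal.{u}) (P : Set M → Prop) (w : Set M) : Prop :=
  w.Finite ∧ w.Nonempty ∧
  ∀ (n : ℕ) (a : Fin n → M), Function.Injective a → Set.range a = w →
    ∀ (k : Fin n) (φ : L.Formula (Fin n)),
      FirstOrder.Language.BoundedFormula.IsQF φ → φ.Realize a →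
      ∃ b : Fin 2 → Fin n → M,
        P (Set.range fun p : Fin 2 × Fin n => b p.1 p.2) ∧
        (∀ i : Fin 2, φ.Realize (b i)) ∧
        b 0 k ≠ b 1 k ∧
        (∀ m : Fin n, m ≠ k → b 0 m = b 1 m) ∧
        (l = 0 → ∀ m : Fin n, b 0 m = a m)

/-- `rkGe L M l κ α w` says `rk^l(w, M; <κ) ≥ α`. -/
noncomputable def rkGe (L : FirstOrder.Language.{u, u}) (M : Type u) [L.Structure M]
    (l : ℕ) (κ : Cardinal.{u}) (α : Ordinal.{u}) : Set M → Prop :=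
  Ordinal.limitRecOn (motive := fun _ => Set M → Prop) α
    (rkBase L M κ)
    (fun _ ih => rkStep L M l κ ih)
    (fun o _ ih w => ∀ (β : Ordinal.{u}) (h : β < o), ih β h w)

/-- `Pr l α lam bound θ` is `Pr^l_α(lam; <bound, θ)`: every model with universe of
cardinality `lam` and vocabulary of cardinality `≤ θ` has `rk^l(M; <bound) ≥ α`,
where `rk^l(M; <bound) = sup { rk^l(w, M; <bound) + 1 : w ∈ [M]* }`. -/
def Pr (l : ℕ) (α : Ordinal.{u}) (lam bound θ : Cardinal.{u}) : Prop :=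
  ∀ (L : FirstOrder.Language.{u, u}) (M : Type u) (S : L.Structure M),
    Cardinal.mk M = lam → L.card ≤ θ →
    ∀ β < α, ∃ w : Set M, w.Finite ∧ w.Nonempty ∧ @rkGe L M S l bound β w
/-! ### Auxiliary lemmas -/

section Aux

variable {L : FirstOrder.Language.{u, u}} {M : Type u} [S : L.Structure M]

lemma rkGe_zero (l : ℕ) (κ : Cardinal.{u}) :
    rkGe L M l κ 0 = rkBase L M κ :=
  Ordinal.limitRecOn_zero _ _ _

lemma rkGe_succ (l : ℕ) (κ : Cardinal.{u}) (β : Ordinal.{u}) :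
    rkGe L M l κ (Order.succ β) = rkStep L M l κ (rkGe L M l κ β) :=
  Ordinal.limitRecOn_succ _ _ _ _

lemma rkGe_limit (l : ℕ) (κ : Cardinal.{u}) {o : Ordinal.{u}} (h : Order.IsSuccLimit o) (w : Set M) :
    rkGe L M l κ o w ↔ ∀ β < o, rkGe L M l κ β w := by
  rw [rkGe, Ordinal.limitRecOn_limit _ _ _ _ h]
  exact Iff.rfl

lemma rkGe_finite_nonempty {l : ℕ} {κ : Cardinal.{u}} {β : Ordinal.{u}} {w : Set M}
    (h : rkGe L M l κ β w) : w.Finite ∧ w.Nonempty := by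
  rcases Ordinal.zero_or_succ_or_isSuccLimit β with rfl | ⟨γ, rfl⟩ | hl
  · rw [rkGe_zero] at h; exact ⟨h.1, h.2.1⟩
  · rw [rkGe_succ] at h; exact ⟨h.1, h.2.1⟩
  · have h0 := (rkGe_limit l κ hl w).1 h 0 hl.pos
    rw [rkGe_zero] at h0; exact ⟨h0.1, h0.2.1⟩

lemma rkGe_zero_to_one (κb : Cardinal.{u}) (β : Ordinal.{u}) :
    ∀ w : Set M, rkGe L M 0 κb β w → rkGe L M 1 κb β w := by
  induction β using Ordinal.induction with
  | h β IH =>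
    rcases Ordinal.zero_or_succ_or_isSuccLimit β with rfl | ⟨γ, rfl⟩ | hl
    · rw [rkGe_zero 0, rkGe_zero 1]; exact fun w h => h
    · rw [rkGe_succ, rkGe_succ]
      rintro w ⟨h1, h2, h3⟩
      refine ⟨h1, h2, fun n a inj ra k φ qf hr => ?_⟩
      obtain ⟨b, hP, hre, hne, hag, _⟩ := h3 n a inj ra k φ qf hr
      exact ⟨b, IH γ (Order.lt_succ γ) _ hP, hre, hne, hag, fun h => absurd h one_ne_zero⟩
    · intro w h
      rw [rkGe_limit 1 κb hl]
      rw [rkGe_limit 0 κb hl] at h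
      exact fun γ hγ => IH γ hγ w (h γ hγ)

lemma isQF_onBoundedFormula {L' : FirstOrder.Language.{u, u}} (ρ : L →ᴸ L') {α : Type v} {n : ℕ}
    {φ : L.BoundedFormula α n} (h : φ.IsQF) : (ρ.onBoundedFormula φ).IsQF := by
  induction h with
  | falsum => exact Language.BoundedFormula.isQF_bot
  | of_isAtomic h =>
    cases h with
    | equal t₁ t₂ => exact (Language.BoundedFormula.IsAtomic.equal _ _).isQF
    | rel R ts => exact (Language.BoundedFormula.IsAtomic.rel _ _).isQF
  | imp h1 h2 ih1 ih2 => exact ih1.imp ih2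

lemma isQF_onFormula {L' : FirstOrder.Language.{u, u}} (ρ : L →ᴸ L') {α : Type v}
    {φ : L.Formula α} (h : φ.IsQF) : (ρ.onFormula φ).IsQF :=
  isQF_onBoundedFormula ρ h

lemma clLt_subset_expansion {L' : FirstOrder.Language.{u, u}}
    [S' : L'.Structure M] (ρ : L →ᴸ L') [ρ.IsExpansionOn M]
    (κ : Cardinal.{u}) (B : Set M) :
    clLt L M κ B ⊆ clLt L' M κ B := by
  rintro a ⟨n, φ, qf, b, hb, hr, hc⟩
  refine ⟨n, ρ.onFormula φ, ?_, b, hb, ?_, ?_⟩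
  · exact isQF_onFormula ρ qf
  · rw [Language.LHom.realize_onFormula]; exact hr
  · refine lt_of_le_of_lt (le_of_eq (Cardinal.mk_congr (Equiv.subtypeEquivRight fun x => ?_))) hc
    exact Language.LHom.realize_onFormula ρ φ

lemma exists_enum {w : Set M} (hf : w.Finite) (hne : w.Nonempty) :
    ∃ (n : ℕ) (a : Fin n → M), 0 < n ∧ Function.Injective a ∧ Set.range a = w := by
  haveI := hf.fintype
  haveI : Nonempty w := hne.to_subtype
  refine ⟨Fintype.card w, fun i => ((Fintype.equivFin w).symm i : M), Fintype.card_pos, ?_, ?_⟩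
  · exact Subtype.val_injective.comp (Fintype.equivFin w).symm.injective
  · have : (fun i => ((Fintype.equivFin w).symm i : M))
        = Subtype.val ∘ (Fintype.equivFin w).symm := rfl
    rw [this, Set.range_comp, Equiv.range_eq_univ, Set.image_univ, Subtype.range_coe]

lemma range_pair_eq {α : Type v} {N : Type u} (b : Fin 2 → α → N) :
    (Set.range fun p : Fin 2 × α => b p.1 p.2) = Set.range (b 0) ∪ Set.range (b 1) := by
  ext x
  constructor
  · rintro ⟨⟨i, m⟩, rfl⟩
    fin_cases i
    · exact Or.inl ⟨m, rfl⟩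
    · exact Or.inr ⟨m, rfl⟩
  · rintro (⟨m, rfl⟩ | ⟨m, rfl⟩)
    · exact ⟨(0, m), rfl⟩
    · exact ⟨(1, m), rfl⟩

end Aux

/-! ### The expanded language and structure -/

/-- The language of additional relation symbols: for each quantifier-free
formula `φ` in `n` variables, each coordinate `k < n` and each ordinal `δ < β`,
a relation symbol asserting the existence of a "good pair" witness. -/
def egLang (L : FirstOrder.Language.{u, u}) (β : Ordinal.{u}) : FirstOrder.Language.{u, u} where
  Functions := fun _ => PEmpty
  Relations := fun n => L.Formula (Fin n) × ULift.{u} (Fin n) × β.ToType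

/-- The interpretation of the additional relation symbols. -/
noncomputable def egStructure (L : FirstOrder.Language.{u, u}) (M : Type u) [L.Structure M]
    (κb : Cardinal.{u}) (β : Ordinal.{u}) : (egLang L β).Structure M where
  funMap := fun f _ => f.elim
  RelMap := fun {n} r c => ∃ y : M,
    y ≠ c r.2.1.down ∧ r.1.Realize c ∧ r.1.Realize (Function.update c r.2.1.down y) ∧
    rkGe L M 0 κb (((Ordinal.ToType.mk (o := β)).symm r.2.2 : Set.Iio β) : Ordinal.{u})
      (Set.range c ∪ {y})

lemma egLang_card_le {L : FirstOrder.Language.{u, u}} {κ : Cardinal.{u}}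
    (hκ : ℵ₀ ≤ κ) (hL : L.card ≤ κ) {β : Ordinal.{u}} (hβ : β.card ≤ κ) :
    (L.sum (egLang L β)).card ≤ κ := by
  have hF : ∀ n : ℕ, #(L.Formula (Fin n)) ≤ κ := by
    intro n
    have h1 : #(L.Formula (Fin n)) ≤ #(Σ m, L.BoundedFormula (Fin n) m) :=
      Cardinal.mk_le_of_injective (f := fun ψ => (⟨0, ψ⟩ : Σ m, L.BoundedFormula (Fin n) m))
        (fun a b h => by simpa using h)
    refine h1.trans ((Language.BoundedFormula.card_le).trans ?_)
    refine max_le hκ ?_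
    have h2 : Cardinal.lift.{u} #(Fin n) ≤ κ := by
      simp only [Cardinal.mk_fin, Cardinal.lift_natCast]
      exact (Cardinal.nat_lt_aleph0 n).le.trans hκ
    have h3 : Cardinal.lift.{0} L.card ≤ κ := by simpa using hL
    calc Cardinal.lift.{u} #(Fin n) + Cardinal.lift.{0} L.card ≤ κ + κ := add_le_add h2 h3
      _ = κ := Cardinal.add_eq_self hκ
  have hRel : ∀ n : ℕ, #((egLang L β).Relations n) ≤ κ := by
    intro n
    have : #((egLang L β).Relations n)
        = #(L.Formula (Fin n)) * (#(ULift.{u} (Fin n)) * #(β.ToType)) := by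
      simp [egLang, Cardinal.mk_prod, Cardinal.lift_id]
    rw [this]
    have h2 : #(ULift.{u} (Fin n)) ≤ κ := by
      simp only [Cardinal.mk_uLift, Cardinal.mk_fin, Cardinal.lift_natCast]
      exact (Cardinal.nat_lt_aleph0 n).le.trans hκ
    have h3 : #(β.ToType) ≤ κ := by rw [Cardinal.mk_toType]; exact hβ
    calc #(L.Formula (Fin n)) * (#(ULift.{u} (Fin n)) * #(β.ToType))
        ≤ κ * (κ * κ) := mul_le_mul' (hF n) (mul_le_mul' h2 h3)
      _ = κ := by rw [Cardinal.mul_eq_self hκ, Cardinal.mul_eq_self hκ]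
  have hEg : (egLang L β).card ≤ κ := by
    rw [Language.card, Cardinal.mk_sum]
    have h1 : #(Σ l, (egLang L β).Functions l) = 0 := by
      rw [Cardinal.mk_eq_zero_iff]
      exact ⟨fun x => PEmpty.elim x.2⟩
    have h2 : #(Σ l, (egLang L β).Relations l) ≤ κ := by
      rw [Cardinal.mk_sigma]
      calc (Cardinal.sum fun l => #((egLang L β).Relations l))
          ≤ Cardinal.sum fun _ : ℕ => κ := Cardinal.sum_le_sum _ _ hRel
        _ = Cardinal.lift.{u} #ℕ * Cardinal.lift.{0} κ := Cardinal.sum_const ℕ κ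
        _ = ℵ₀ * κ := by simp
        _ = κ := by rw [Cardinal.mul_eq_max (le_refl ℵ₀) hκ]; exact max_eq_right hκ
    rw [Cardinal.lift_id, Cardinal.lift_id, h1, zero_add]
    exact h2
  rw [Language.card_sum, Cardinal.lift_id, Cardinal.lift_id]
  calc L.card + (egLang L β).card ≤ κ + κ := add_le_add hL hEg
    _ = κ := Cardinal.add_eq_self hκ


lemma range_update_union {n : ℕ} {M : Type u} (a : Fin n → M) (k : Fin n) (y : M) :
    Set.range a ∪ Set.range (Function.update a k y) = Set.range a ∪ {y} := by
  ext x
  simp only [Set.mem_union, Set.mem_range, Set.mem_singleton_iff]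
  constructor
  · rintro (⟨m, rfl⟩ | ⟨m, rfl⟩)
    · exact Or.inl ⟨m, rfl⟩
    · by_cases hm : m = k
      · subst hm; right; rw [Function.update_self]
      · left; exact ⟨m, (Function.update_of_ne hm y a).symm⟩
  · rintro (⟨m, rfl⟩ | h)
    · exact Or.inl ⟨m, rfl⟩
    · exact Or.inr ⟨k, by rw [Function.update_self, h]⟩

lemma key {L : FirstOrder.Language.{u, u}} {M : Type u} [S : L.Structure M]
    (κb : Cardinal.{u}) (β : Ordinal.{u}) :
    ∀ γ : Ordinal.{u}, γ ≤ β → ∀ w : Set M,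
      @rkGe (L.sum (egLang L β)) M
        (@Language.sumStructure L (egLang L β) M S (egStructure L M κb β)) 1 κb γ w →
      rkGe L M 0 κb γ w := by
  letI iE : (egLang L β).Structure M := egStructure L M κb β
  intro γ
  induction γ using Ordinal.induction with
  | h γ IH =>
    intro hγβ w h
    rcases Ordinal.zero_or_succ_or_isSuccLimit γ with rfl | ⟨δ, rfl⟩ | hl
    · rw [rkGe_zero 1 κb] at h
      rw [rkGe_zero 0 κb]
      exact ⟨h.1, h.2.1, fun a ha hc =>
        h.2.2 a ha (clLt_subset_expansion Language.LHom.sumInl κb (w \ {a}) hc)⟩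
    · rw [rkGe_succ] at h
      rw [rkGe_succ]
      obtain ⟨hfin, hne, H⟩ := h
      refine ⟨hfin, hne, ?_⟩
      intro n a inj ra k φ qf hreal
      have hδβ : δ < β := lt_of_lt_of_le (Order.lt_succ δ) hγβ
      by_cases hex : ∃ y : M, y ≠ a k ∧ φ.Realize a ∧ φ.Realize (Function.update a k y) ∧
          rkGe L M 0 κb δ (Set.range a ∪ {y})
      · obtain ⟨y, hy1, _, hy3, hy4⟩ := hex
        refine ⟨![a, Function.update a k y], ?_, ?_, ?_, ?_, ?_⟩
        · rw [range_pair_eq]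
          simp only [Matrix.cons_val_zero, Matrix.cons_val_one, Matrix.head_cons]
          rw [range_update_union]
          exact hy4
        · intro i
          fin_cases i
          · simpa using hreal
          · simpa using hy3
        · simp only [Matrix.cons_val_zero, Matrix.cons_val_one, Matrix.head_cons]
          rw [Function.update_self]
          exact fun hh => hy1 hh.symm
        · intro m hm
          simp only [Matrix.cons_val_zero, Matrix.cons_val_one, Matrix.head_cons]
          exact (Function.update_of_ne hm y a).symm
        · intro _ m
          simp
      · -- the "no good pair" case: contradict the `l = 1` rank
        exfalso
        set r : (egLang L β).Relations n :=
          (φ, ULift.up k, Ordinal.ToType.mk (o := β) ⟨δ, hδβ⟩) with hr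
        have hdec : ((Ordinal.ToType.mk (o := β)).symm (Ordinal.ToType.mk (o := β) ⟨δ, hδβ⟩)
            : Set.Iio β) = ⟨δ, hδβ⟩ := OrderIso.symm_apply_apply _ _
        have hRelMap : ∀ c : Fin n → M,
            Language.Structure.RelMap (L := L.sum (egLang L β)) (M := M) (Sum.inr r) c ↔
              (∃ y : M, y ≠ c k ∧ φ.Realize c ∧ φ.Realize (Function.update c k y) ∧
                rkGe L M 0 κb δ (Set.range c ∪ {y})) := by
          intro c
          have heq : Language.Structure.RelMap (L := L.sum (egLang L β)) (M := M)
              (Sum.inr r) c =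
              (∃ y : M, y ≠ c k ∧ φ.Realize c ∧ φ.Realize (Function.update c k y) ∧
                rkGe L M 0 κb
                  (((Ordinal.ToType.mk (o := β)).symm (Ordinal.ToType.mk (o := β) ⟨δ, hδβ⟩)
                    : Set.Iio β) : Ordinal.{u})
                  (Set.range c ∪ {y})) := rfl
          rw [heq, hdec]
        set Ratom : (L.sum (egLang L β)).Formula (Fin n) :=
          Language.Relations.formula (Sum.inr r) (fun i => Language.Term.var i) with hRatom
        set ψ : (L.sum (egLang L β)).Formula (Fin n) :=
          ((Language.LHom.sumInl.onFormula φ).imp Ratom).not with hψdef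
        have hRatomQF : Ratom.IsQF := (Language.BoundedFormula.IsAtomic.rel _ _).isQF
        have qfψ : ψ.IsQF := ((isQF_onFormula _ qf).imp hRatomQF).not
        have hψ : ∀ c : Fin n → M, ψ.Realize c ↔
            (φ.Realize c ∧
              ¬ Language.Structure.RelMap (L := L.sum (egLang L β)) (M := M) (Sum.inr r) c) := by
          intro c
          rw [hψdef, Language.Formula.realize_not, Language.Formula.realize_imp,
            Language.LHom.realize_onFormula, hRatom]
          exact Classical.not_imp
        have hψa : ψ.Realize a :=
          (hψ a).2 ⟨hreal, fun hre => hex ((hRelMap a).1 hre)⟩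
        obtain ⟨b, hP, hrealb, hneq, hagree, -⟩ := H n a inj ra k ψ qfψ hψa
        have hb0 := (hψ _).1 (hrealb 0)
        have hb1 := (hψ _).1 (hrealb 1)
        have hupd : Function.update (b 0) k (b 1 k) = b 1 := by
          funext m
          by_cases hm : m = k
          · subst hm; rw [Function.update_self]
          · rw [Function.update_of_ne hm]; exact hagree m hm
        have hrank : rkGe L M 0 κb δ
            (Set.range fun p : Fin 2 × Fin n => b p.1 p.2) :=
          IH δ (Order.lt_succ δ) hδβ.le _ hP
        have hrange : (Set.range fun p : Fin 2 × Fin n => b p.1 p.2)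
            = Set.range (b 0) ∪ {b 1 k} := by
          calc (Set.range fun p : Fin 2 × Fin n => b p.1 p.2)
              = Set.range (b 0) ∪ Set.range (b 1) := range_pair_eq b
            _ = Set.range (b 0) ∪ Set.range (Function.update (b 0) k (b 1 k)) := by
                rw [hupd]
            _ = Set.range (b 0) ∪ {b 1 k} := range_update_union _ _ _
        refine hb0.2 ((hRelMap (b 0)).2 ⟨b 1 k, fun hh => hneq hh.symm, hb0.1, ?_, ?_⟩)
        · rw [hupd]; exact hb1.1
        · rw [← hrange]; exact hrank
    · rw [rkGe_limit 1 κb hl] at h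
      rw [rkGe_limit 0 κb hl]
      intro γ' hγ'
      exact IH γ' hγ' (le_trans hγ'.le hγβ) w (h γ' hγ')


/-- for infinite `κ`, `λ ≥ κ` and `α ≤ κ⁺`,
`Pr⁰_α(λ; <κ⁺, κ) ↔ Pr¹_α(λ; <κ⁺, κ)`, and consequently
`λ⁰_α(κ) = λ¹_α(κ)` where `λ^l_α(κ) = min {λ : Pr^l_α(λ; <κ⁺, κ)}`. -/
theorem stmt_2 (κ : Cardinal.{u}) (hκ : ℵ₀ ≤ κ)
    (lam : Cardinal.{u}) (hlam : κ ≤ lam)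
    (α : Ordinal.{u}) (hα : α ≤ (Order.succ κ).ord) :
    (Pr 0 α lam (Order.succ κ) κ ↔ Pr 1 α lam (Order.succ κ) κ) ∧
    sInf {μ : Cardinal.{u} | Pr 0 α μ (Order.succ κ) κ} =
      sInf {μ : Cardinal.{u} | Pr 1 α μ (Order.succ κ) κ} := by
  have main : ∀ lam' : Cardinal.{u},
      Pr 0 α lam' (Order.succ κ) κ ↔ Pr 1 α lam' (Order.succ κ) κ := by
    intro lam'
    constructor
    · intro h L M S hM hc β hβ
      obtain ⟨w, hf, hne, hr⟩ := h L M S hM hc β hβ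
      letI := S
      exact ⟨w, hf, hne, rkGe_zero_to_one _ _ w hr⟩
    · intro h L M S hM hc β hβ
      by_contra hnex
      letI := S
      have hno : ∀ w : Set M, ¬ @rkGe L M S 0 (Order.succ κ) β w := fun w hw =>
        hnex ⟨w, (rkGe_finite_nonempty hw).1, (rkGe_finite_nonempty hw).2, hw⟩
      letI iE : (egLang L β).Structure M := egStructure L M (Order.succ κ) β
      have hβκ : β.card ≤ κ := by
        have hβ' : β < (Order.succ κ).ord := lt_of_lt_of_le hβ hα
        exact Order.lt_succ_iff.mp (Cardinal.lt_ord.mp hβ')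
      obtain ⟨w, hwf, hwne, hw⟩ := h (L.sum (egLang L β)) M inferInstance hM
        (egLang_card_le hκ hc hβκ) β hβ
      exact hno w (key (Order.succ κ) β β le_rfl w hw)
  exact ⟨main lam, congrArg sInf (Set.ext fun μ => main μ)⟩


end Sh522
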